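/- Let R be a ring (not necessarily unital) and let F be a field of characteristic 0. Then for every n ≥ 1, dim_F P_n(F)/(P_n(F) ∩ Id(R ⊗_ℤ F, F)) equals the rank of the finitely generated free abelian group P_n(ℤ)/(P_n(ℤ) ∩ Id(R/Tor R, ℤ)), where Tor R = {r ∈ R : m·r = 0 for some positive integer m} is the torsion ideal of R. -/

import Mathlib

/-- Left-normed product `v 0 * v 1 * ⋯ * v n` of a nonempty family in a (possibly
non-unital) multiplicative structure. -/
def mprod {A : Type*} [Mul A] : {n : ℕ} → (Fin (n + 1) → A) → A
  | 0, v => v 0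
  | _ + 1, v => mprod (fun i => v i.castSucc) * v (Fin.last _)

/-- The group `P_{n+1}(ℤ)` of multilinear polynomials with integer coefficients in the
variables `x_1, …, x_{n+1}`: the free abelian group on the monomials
`x_{σ(1)} ⋯ x_{σ(n+1)}`, `σ ∈ S_{n+1}`. -/
abbrev PZ (n : ℕ) : Type := Equiv.Perm (Fin (n + 1)) →₀ ℤ

/-- Evaluation of a multilinear integer polynomial at the tuple `v` in a
(not necessarily unital) ring `A`, as a `ℤ`-linear map. -/
noncomputable def evalZ (A : Type*) [NonUnitalRing A] {n : ℕ} (v : Fin (n + 1) → A) :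
    PZ n →ₗ[ℤ] A :=
  Finsupp.lift A ℤ (Equiv.Perm (Fin (n + 1))) (fun σ => mprod (fun i => v (σ i)))

/-- `P_{n+1}(ℤ) ∩ Id(A, ℤ)`: the multilinear polynomial identities of `A`
with integer coefficients. -/
noncomputable def IdZ (A : Type*) [NonUnitalRing A] (n : ℕ) : AddSubgroup (PZ n) where
  carrier := {f | ∀ v : Fin (n + 1) → A, evalZ A v f = 0}
  zero_mem' := fun v => map_zero _
  add_mem' := fun hf hg v => by rw [map_add, hf v, hg v, add_zero]
  neg_mem' := fun hf v => by rw [map_neg, hf v, neg_zero]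

/-- The space `P_{n+1}(F)` of multilinear polynomials with coefficients in `F`. -/
abbrev PF (F : Type*) [Field F] (n : ℕ) := Equiv.Perm (Fin (n + 1)) →₀ F

/-- Evaluation of a multilinear polynomial over `F` in an `F`-algebra `B`
(possibly non-unital), as an `F`-linear map. -/
noncomputable def evalF (F : Type*) [Field F] {B : Type*} [NonUnitalRing B] [Module F B]
    {n : ℕ} (v : Fin (n + 1) → B) : PF F n →ₗ[F] B :=
  Finsupp.lift B F (Equiv.Perm (Fin (n + 1))) (fun σ => mprod (fun i => v (σ i)))

/-- `P_{n+1}(F) ∩ Id(B, F)`: the multilinear polynomial identities of `B`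
with coefficients in `F`. -/
noncomputable def IdF (F : Type*) [Field F] (B : Type*) [NonUnitalRing B] [Module F B]
    (n : ℕ) : Submodule F (PF F n) where
  carrier := {f | ∀ v : Fin (n + 1) → B, evalF F v f = 0}
  zero_mem' := fun v => map_zero _
  add_mem' := fun hf hg v => by rw [map_add, hf v, hg v, add_zero]
  smul_mem' := fun c f hf v => by rw [map_smul, hf v, smul_zero]

open scoped TensorProduct

-- Note: we realize the `F`-algebra `R ⊗_ℤ F` as `F ⊗[ℤ] R` (the same tensor product
-- with the factors written in the other order), which carries the standard
-- non-unital ring and `F`-module structures in Mathlib.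

/-- `P_{n+1}(ℤ) ∩ Id(R/Tor R, ℤ)`: the multilinear integer polynomials all of whose
evaluations on `R` land in the torsion ideal `Tor R`; equivalently, the multilinear
identities of the quotient ring `R/Tor R`. -/
noncomputable def IdZModTor (R : Type*) [NonUnitalRing R] (n : ℕ) : AddSubgroup (PZ n) where
  carrier := {f | ∀ v : Fin (n + 1) → R, evalZ R v f ∈ Submodule.torsion ℤ R}
  zero_mem' := fun v => by rw [map_zero]; exact zero_mem _
  add_mem' := fun hf hg v => by rw [map_add]; exact add_mem (hf v) (hg v)
  neg_mem' := fun hf v => by rw [map_neg]; exact neg_mem (hf v)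

noncomputable example (R F : Type) [NonUnitalRing R] [Field F] : NonUnitalRing (F ⊗[ℤ] R) :=
  inferInstance
noncomputable example (R F : Type) [NonUnitalRing R] [Field F] : Module F (F ⊗[ℤ] R) :=
  inferInstance


section aux
variable {A : Type*} [NonUnitalRing A] {n : ℕ}
set_option linter.unusedSectionVars false

lemma mprod_zero (v : Fin 1 → A) : mprod v = v 0 := rfl

lemma mprod_succ (v : Fin (n + 2) → A) :
    mprod v = mprod (fun i => v i.castSucc) * v (Fin.last _) := rfl

lemma update_castSucc (v : Fin (n + 2) → A) (j : Fin (n + 1)) (x : A) :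
    (fun i : Fin (n + 1) => Function.update v j.castSucc x i.castSucc) =
      Function.update (fun i : Fin (n + 1) => v i.castSucc) j x := by
  funext i
  rcases eq_or_ne i j with rfl | h
  · simp
  · rw [Function.update_of_ne (fun hc => h (Fin.castSucc_injective _ hc)),
      Function.update_of_ne h]

lemma update_last (v : Fin (n + 2) → A) (x : A) :
    (fun i : Fin (n + 1) => Function.update v (Fin.last _) x i.castSucc) =
      (fun i : Fin (n + 1) => v i.castSucc) := by
  funext i
  exact Function.update_of_ne (Fin.castSucc_lt_last i).ne _ _

lemma mprod_update_add (v : Fin (n + 1) → A) (i : Fin (n + 1)) (x y : A) :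
    mprod (Function.update v i (x + y)) =
      mprod (Function.update v i x) + mprod (Function.update v i y) := by
  induction n with
  | zero =>
    have : i = 0 := Fin.ext (by omega)
    subst this
    simp [mprod_zero]
  | succ m ih =>
    rcases Fin.eq_castSucc_or_eq_last i with ⟨j, rfl⟩ | rfl
    · simp only [mprod_succ, update_castSucc, ih,
        Function.update_of_ne (Fin.castSucc_lt_last j).ne,
        Function.update_of_ne (Fin.castSucc_lt_last j).ne', add_mul]
    · simp only [mprod_succ, update_last, Function.update_self, mul_add]

lemma mprod_update_smul (v : Fin (n + 1) → A) (i : Fin (n + 1)) (c : ℤ) (x : A) :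
    mprod (Function.update v i (c • x)) = c • mprod (Function.update v i x) := by
  induction n with
  | zero =>
    have : i = 0 := Fin.ext (by omega)
    subst this
    simp [mprod_zero]
  | succ m ih =>
    rcases Fin.eq_castSucc_or_eq_last i with ⟨j, rfl⟩ | rfl
    · simp only [mprod_succ, update_castSucc, ih,
        Function.update_of_ne (Fin.castSucc_lt_last j).ne,
        Function.update_of_ne (Fin.castSucc_lt_last j).ne', smul_mul_assoc]
    · simp only [mprod_succ, update_last, Function.update_self, mul_smul_comm]

/-- The monomial `x_{σ(0)} ⋯ x_{σ(n)}` as a multilinear map. -/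
def monoML (A : Type*) [NonUnitalRing A] {n : ℕ} (σ : Equiv.Perm (Fin (n + 1))) :
    MultilinearMap ℤ (fun _ : Fin (n + 1) => A) A where
  toFun v := mprod (fun i => v (σ i))
  map_update_add' := by
    intro dec v i x y
    have hd := Subsingleton.elim dec (instDecidableEqFin (n + 1))
    subst hd
    have h : ∀ z : A, (fun k : Fin (n+1) => Function.update v i z (σ k)) =
        Function.update (fun k => v (σ k)) (σ.symm i) z := by
      intro z
      have := Function.update_comp_equiv v σ i z
      exact funext fun k => congrFun this k
    simp only [h]
    exact mprod_update_add _ _ _ _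
  map_update_smul' := by
    intro dec v i c x
    have hd := Subsingleton.elim dec (instDecidableEqFin (n + 1))
    subst hd
    have h : ∀ z : A, (fun k : Fin (n+1) => Function.update v i z (σ k)) =
        Function.update (fun k => v (σ k)) (σ.symm i) z := by
      intro z
      have := Function.update_comp_equiv v σ i z
      exact funext fun k => congrFun this k
    simp only [h]
    exact mprod_update_smul _ _ _ _

end aux

section aux2
variable {R F : Type} [NonUnitalRing R] [Field F]
variable {n : ℕ}

lemma evalZ_apply (A : Type*) [NonUnitalRing A] (v : Fin (n + 1) → A) (f : PZ n) :
    evalZ A v f = f.sum fun σ c => c • mprod (fun i => v (σ i)) := by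
  simp [evalZ, Finsupp.lift_apply]

lemma evalZ_eq_sum_monoML (A : Type*) [NonUnitalRing A] (v : Fin (n + 1) → A) (f : PZ n) :
    evalZ A v f = (f.sum fun σ c => c • monoML A σ) v := by
  rw [evalZ_apply]
  rw [Finsupp.sum, Finsupp.sum, MultilinearMap.sum_apply]
  rfl

lemma mprod_tmul (a : Fin (n + 1) → F) (r : Fin (n + 1) → R) :
    mprod (fun i => a i ⊗ₜ[ℤ] r i) = (∏ i, a i) ⊗ₜ[ℤ] mprod r := by
  induction n with
  | zero => simp [mprod_zero]; rfl
  | succ m ih =>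
    erw [mprod_succ (A := F ⊗[ℤ] R), mprod_succ (A := R), ih, Algebra.TensorProduct.tmul_mul_tmul,
      ← Fin.prod_univ_castSucc]

/-- If a multilinear integer polynomial vanishes at all tuples of pure tensors,
it vanishes identically on `F ⊗[ℤ] R`. -/
lemma evalZ_tensor_eq_zero (f : PZ n)
    (h : ∀ (a : Fin (n + 1) → F) (r : Fin (n + 1) → R),
      evalZ (F ⊗[ℤ] R) (fun i => a i ⊗ₜ[ℤ] r i) f = 0)
    (v : Fin (n + 1) → F ⊗[ℤ] R) : evalZ (F ⊗[ℤ] R) v f = 0 := by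
  set T : MultilinearMap ℤ (fun _ : Fin (n + 1) => F ⊗[ℤ] R) (F ⊗[ℤ] R) :=
    f.sum fun σ c => c • monoML (F ⊗[ℤ] R) σ with hT
  have hTv : ∀ w, evalZ (F ⊗[ℤ] R) w f = T w := fun w => evalZ_eq_sum_monoML _ w f
  rw [hTv]
  choose S hS using fun i => TensorProduct.exists_finset (v i)
  calc T v = T (fun i => ∑ p ∈ S i, p.1 ⊗ₜ[ℤ] p.2) := by
        congr 1; funext i; exact hS i
    _ = ∑ q ∈ Fintype.piFinset S, T (fun i => (q i).1 ⊗ₜ[ℤ] (q i).2) :=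
        T.map_sum_finset _ _
    _ = 0 := by
        apply Finset.sum_eq_zero
        intro q _
        rw [← hTv]
        exact h _ _
end aux2

section aux3
variable {R F : Type} [NonUnitalRing R] [Field F] {n : ℕ}

/-- Coefficient extension `P_n(ℤ) → P_n(F)`. -/
noncomputable def phiZF (F : Type) [Field F] (n : ℕ) : PZ n →ₗ[ℤ] PF F n :=
  Finsupp.mapRange.linearMap (Algebra.linearMap ℤ F)

lemma phiZF_apply (f : PZ n) (σ : Equiv.Perm (Fin (n + 1))) :
    phiZF F n f σ = (f σ : F) := by
  simp [phiZF, Finsupp.mapRange.linearMap]; rfl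

lemma tmul_torsion_eq_zero [CharZero F] (x : F) (t : R)
    (ht : t ∈ Submodule.torsion ℤ R) : x ⊗ₜ[ℤ] t = (0 : F ⊗[ℤ] R) := by
  obtain ⟨m, hm⟩ := ht
  have hm' : (m : ℤ) • t = 0 := hm
  have hmF : ((m : ℤ) : F) ≠ 0 :=
    Int.cast_ne_zero.mpr (nonZeroDivisors.ne_zero m.2)
  calc x ⊗ₜ[ℤ] t = ((m : ℤ) • (((m : ℤ) : F)⁻¹ * x)) ⊗ₜ[ℤ] t := by
        rw [zsmul_eq_mul, ← mul_assoc, mul_inv_cancel₀ hmF, one_mul]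
    _ = (((m : ℤ) : F)⁻¹ * x) ⊗ₜ[ℤ] ((m : ℤ) • t) := TensorProduct.smul_tmul _ _ _
    _ = 0 := by rw [hm', TensorProduct.tmul_zero]

lemma evalF_apply {B : Type*} [NonUnitalRing B] [Module F B]
    (v : Fin (n + 1) → B) (g : PF F n) :
    evalF F v g = g.sum fun σ c => c • mprod (fun i => v (σ i)) := by
  simp [evalF, Finsupp.lift_apply]

lemma evalF_phiZF (v : Fin (n + 1) → F ⊗[ℤ] R) (f : PZ n) :
    evalF F v (phiZF F n f) = evalZ (F ⊗[ℤ] R) v f := by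
  have hphi : phiZF F n f = Finsupp.mapRange (fun c : ℤ => (c : F)) (by simp) f := by
    ext σ; rw [phiZF_apply, Finsupp.mapRange_apply]
  rw [evalF_apply, evalZ_apply, hphi, Finsupp.sum_mapRange_index (by simp)]
  exact Finsupp.sum_congr fun σ _ => Int.cast_smul_eq_zsmul F _ _

lemma phiZF_mem_IdF [CharZero F] {f : PZ n} (hf : f ∈ IdZModTor R n) :
    phiZF F n f ∈ IdF F (F ⊗[ℤ] R) n := by
  show ∀ v : Fin (n + 1) → F ⊗[ℤ] R, evalF F v (phiZF F n f) = 0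
  intro v
  rw [evalF_phiZF]
  refine evalZ_tensor_eq_zero f (fun a r => ?_) v
  rw [evalZ_apply]
  have key : ∀ σ : Equiv.Perm (Fin (n + 1)),
      f σ • mprod (fun i => a (σ i) ⊗ₜ[ℤ] r (σ i)) =
        (∏ i, a i) ⊗ₜ[ℤ] (f σ • mprod (fun i => r (σ i))) := by
    intro σ
    rw [mprod_tmul (fun i => a (σ i)) (fun i => r (σ i)),
      Equiv.prod_comp σ a, TensorProduct.tmul_smul]
  have hsum := Finsupp.sum_congr
    (g1 := fun σ (c : ℤ) => c • mprod fun i => a (σ i) ⊗ₜ[ℤ] r (σ i))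
    (g2 := fun σ (c : ℤ) => (∏ i, a i) ⊗ₜ[ℤ] (c • mprod fun i => r (σ i)))
    (fun σ (_ : σ ∈ f.support) => key σ)
  rw [hsum]
  show (∑ σ ∈ f.support, (∏ i, a i) ⊗ₜ[ℤ] (f σ • mprod fun i => r (σ i))) = 0
  rw [← TensorProduct.tmul_sum]
  refine tmul_torsion_eq_zero _ _ ?_
  have hfr := hf r
  rw [evalZ_apply] at hfr
  exact hfr

end aux3

section aux4
variable {R F : Type} [NonUnitalRing R] [Field F] {n : ℕ}

lemma torsion_of_one_tmul (t : R) (h : (1 : ℚ) ⊗ₜ[ℤ] t = (0 : ℚ ⊗[ℤ] R)) :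
    t ∈ Submodule.torsion ℤ R := by
  have hlm : IsLocalizedModule (nonZeroDivisors ℤ) ((TensorProduct.mk ℤ ℚ R) 1) :=
    (isLocalizedModule_iff_isBaseChange (nonZeroDivisors ℤ) ℚ _).mpr
      (TensorProduct.isBaseChange ℤ R ℚ)
  obtain ⟨s, hs⟩ := (IsLocalizedModule.eq_zero_iff (nonZeroDivisors ℤ)
    ((TensorProduct.mk ℤ ℚ R) 1)).mp h
  exact ⟨s, hs⟩

lemma helper_clear (q : Equiv.Perm (Fin (n + 1)) →₀ ℚ)
    (hq : ∀ r : Fin (n + 1) → R,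
      (q.sum fun σ c => c ⊗ₜ[ℤ] mprod fun i => r (σ i)) = (0 : ℚ ⊗[ℤ] R)) :
    ∃ (f : PZ n) (mz : ℤ), mz ≠ 0 ∧ (∀ σ, (f σ : ℚ) = mz • q σ) ∧ f ∈ IdZModTor R n := by
  classical
  obtain ⟨m, hm⟩ := IsLocalization.exist_integer_multiples (nonZeroDivisors ℤ)
    (Finset.univ) (fun σ : Equiv.Perm (Fin (n + 1)) => q σ)
  have hz : ∀ σ, ∃ z : ℤ, (z : ℚ) = (m : ℤ) • q σ := by
    intro σ
    obtain ⟨z, hzz⟩ := hm σ (Finset.mem_univ σ)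
    exact ⟨z, by simpa [Submonoid.smul_def, algebraMap_int_eq] using hzz⟩
  set f : PZ n := q.mapRange (fun x => ((m : ℤ) • x).num) (by simp) with hfdef
  have hf : ∀ σ, (f σ : ℚ) = (m : ℤ) • q σ := by
    intro σ
    obtain ⟨z, hzz⟩ := hz σ
    rw [hfdef, Finsupp.mapRange_apply, ← hzz, Rat.num_intCast]
  refine ⟨f, (m : ℤ), nonZeroDivisors.ne_zero m.2, hf, ?_⟩
  show ∀ r : Fin (n + 1) → R, evalZ R r f ∈ Submodule.torsion ℤ R
  intro r
  refine torsion_of_one_tmul _ ?_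
  rw [evalZ_apply,
    Finsupp.sum_of_support_subset f (Finsupp.support_mapRange) _ (by simp),
    TensorProduct.tmul_sum]
  have hterm : ∀ σ ∈ q.support,
      (1 : ℚ) ⊗ₜ[ℤ] ((f σ) • mprod fun i => r (σ i)) =
        (m : ℤ) • ((q σ) ⊗ₜ[ℤ] mprod fun i => r (σ i)) := by
    intro σ _
    rw [TensorProduct.tmul_smul, TensorProduct.smul_tmul', TensorProduct.smul_tmul']
    congr 1
    rw [zsmul_eq_mul, mul_one, hf σ]
  rw [Finset.sum_congr rfl hterm, ← Finset.smul_sum]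
  have : (∑ σ ∈ q.support, (q σ) ⊗ₜ[ℤ] mprod fun i => r (σ i)) = (0 : ℚ ⊗[ℤ] R) := hq r
  rw [this, smul_zero]

end aux4

section aux5
variable {R F : Type} [NonUnitalRing R] [Field F] {n : ℕ}

lemma mem_span_of_mem_IdF [CharZero F] {g : PF F n}
    (hg : g ∈ IdF F (F ⊗[ℤ] R) n) :
    g ∈ Submodule.span F (⇑(phiZF F n) '' (IdZModTor R n : Set (PZ n))) := by
  classical
  have hg' : ∀ v : Fin (n + 1) → F ⊗[ℤ] R, evalF F v g = 0 := hg
  set b := Module.Basis.ofVectorSpace ℚ F with hb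
  -- Step 1: evaluations at `1 ⊗ r` give relations in `F ⊗ R`.
  have h1 : ∀ r : Fin (n + 1) → R,
      (∑ σ ∈ g.support, (g σ) ⊗ₜ[ℤ] mprod fun i => r (σ i)) = (0 : F ⊗[ℤ] R) := by
    intro r
    have h := hg' (fun i => (1 : F) ⊗ₜ[ℤ] r i)
    rw [evalF_apply] at h
    have hterm : ∀ σ ∈ g.support,
        g σ • mprod (fun i => (1 : F) ⊗ₜ[ℤ] r (σ i)) =
          (g σ) ⊗ₜ[ℤ] mprod fun i => r (σ i) := by
      intro σ _
      rw [mprod_tmul (fun _ => (1 : F)) (fun i => r (σ i)), TensorProduct.smul_tmul']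
      simp
    calc (∑ σ ∈ g.support, (g σ) ⊗ₜ[ℤ] mprod fun i => r (σ i))
        = ∑ σ ∈ g.support, g σ • mprod (fun i => (1 : F) ⊗ₜ[ℤ] r (σ i)) :=
          Finset.sum_congr rfl (fun σ hσ => (hterm σ hσ).symm)
      _ = 0 := h
  -- Step 2: project along the `ℚ`-basis `b` of `F`.
  have h2 : ∀ (j) (r : Fin (n + 1) → R),
      (((g.mapRange (fun x : F => b.repr x j) (by simp)).sum
        fun σ c => c ⊗ₜ[ℤ] mprod fun i => r (σ i)) : ℚ ⊗[ℤ] R) = 0 := by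
    intro j r
    have h := congrArg (LinearMap.rTensor R ((b.coord j).restrictScalars ℤ)) (h1 r)
    simp only [map_sum, LinearMap.rTensor_tmul, map_zero, LinearMap.coe_restrictScalars,
      Module.Basis.coord_apply] at h
    calc ((g.mapRange (fun x : F => b.repr x j) (by simp)).sum
          fun σ c => c ⊗ₜ[ℤ] mprod fun i => r (σ i))
        = ∑ σ ∈ g.support,
            ((g.mapRange (fun x : F => b.repr x j) (by simp)) σ) ⊗ₜ[ℤ]
              mprod fun i => r (σ i) :=
          Finsupp.sum_of_support_subset _ (Finsupp.support_mapRange) _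
            (fun σ _ => TensorProduct.zero_tmul _ _)
      _ = ∑ σ ∈ g.support, (b.repr (g σ) j) ⊗ₜ[ℤ] mprod fun i => r (σ i) := by
          refine Finset.sum_congr rfl (fun σ _ => ?_)
          rw [Finsupp.mapRange_apply]
      _ = 0 := h
  -- Step 3: clear denominators.
  choose f mz hmz hf hfId using fun j =>
    helper_clear (R := R) (g.mapRange (fun x : F => b.repr x j) (by simp)) (h2 j)
  -- Step 4: reassemble `g`.
  have hgeq : g = ∑ j ∈ g.support.biUnion (fun σ => (b.repr (g σ)).support),
      ((((mz j : ℤ) : F))⁻¹ * (b j)) • phiZF F n (f j) := by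
    ext σ
    rw [Finsupp.finset_sum_apply]
    have hterm : ∀ j, (((((mz j : ℤ) : F))⁻¹ * (b j)) • phiZF F n (f j)) σ =
        ((b.repr (g σ) j : ℚ) : F) * b j := by
      intro j
      rw [Finsupp.smul_apply, phiZF_apply, smul_eq_mul]
      have hfc : ((f j σ : ℤ) : F) = ((mz j : ℤ) : F) * ((b.repr (g σ) j : ℚ) : F) := by
        have : ((f j σ : ℤ) : ℚ) = (mz j : ℤ) • (b.repr (g σ) j) := by
          rw [hf j σ, Finsupp.mapRange_apply]
        calc ((f j σ : ℤ) : F) = (((f j σ : ℤ) : ℚ) : F) := by rw [Rat.cast_intCast]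
          _ = (((mz j : ℤ) • (b.repr (g σ) j) : ℚ) : F) := by rw [this]
          _ = ((mz j : ℤ) : F) * ((b.repr (g σ) j : ℚ) : F) := by
              rw [zsmul_eq_mul, Rat.cast_mul, Rat.cast_intCast]
      rw [hfc]
      have hne : (((mz j : ℤ)) : F) ≠ 0 := Int.cast_ne_zero.mpr (hmz j)
      field_simp
    rw [Finset.sum_congr rfl (fun j _ => hterm j)]
    symm
    have hsub : (b.repr (g σ)).support ⊆
        g.support.biUnion (fun σ' => (b.repr (g σ')).support) := by
      intro j hj
      by_cases hσ : σ ∈ g.support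
      · exact Finset.mem_biUnion.mpr ⟨σ, hσ, hj⟩
      · rw [Finsupp.notMem_support_iff.mp hσ] at hj
        simp at hj
    calc (∑ j ∈ g.support.biUnion (fun σ' => (b.repr (g σ')).support),
          ((b.repr (g σ) j : ℚ) : F) * b j)
        = ∑ j ∈ g.support.biUnion (fun σ' => (b.repr (g σ')).support),
            (b.repr (g σ) j) • b j := by
          refine Finset.sum_congr rfl (fun j _ => ?_)
          rw [Rat.smul_def]
      _ = (b.repr (g σ)).sum (fun j a => a • b j) :=
          (Finsupp.sum_of_support_subset (b.repr (g σ)) hsub (fun j a => a • b j)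
            (fun j _ => zero_smul ℚ _)).symm
      _ = g σ := by
          rw [← Finsupp.linearCombination_apply]
          exact b.linearCombination_repr (g σ)
  rw [hgeq]
  refine Submodule.sum_mem _ (fun j _ => Submodule.smul_mem _ _ ?_)
  exact Submodule.subset_span ⟨f j, hfId j, rfl⟩

end aux5

section aux6
variable {R F : Type} [NonUnitalRing R] [Field F] {n : ℕ}

lemma IdF_eq_span [CharZero F] :
    IdF F (F ⊗[ℤ] R) n =
      Submodule.span F (⇑(phiZF F n) '' (IdZModTor R n : Set (PZ n))) := by
  apply le_antisymm
  · intro g hgm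
    exact mem_span_of_mem_IdF hgm
  · rw [Submodule.span_le]
    rintro _ ⟨fz, hfz, rfl⟩
    exact phiZF_mem_IdF hfz

/-- The canonical `F`-linear map `F ⊗[ℤ] P_n(ℤ) → P_n(F)`. -/
noncomputable def eL (F : Type) [Field F] (n : ℕ) : F ⊗[ℤ] PZ n →ₗ[F] PF F n where
  toFun := TensorProduct.finsuppScalarRight ℤ ℤ F (Equiv.Perm (Fin (n + 1)))
  map_add' := map_add _
  map_smul' c t := by
    induction t using TensorProduct.induction_on with
    | zero => simp
    | tmul x p =>
        rw [RingHom.id_apply, TensorProduct.smul_tmul']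
        ext σ
        rw [TensorProduct.finsuppScalarRight_apply_tmul_apply, Finsupp.smul_apply,
          TensorProduct.finsuppScalarRight_apply_tmul_apply]
        exact smul_comm _ _ _
    | add t1 t2 h1 h2 =>
        have h1' : (TensorProduct.finsuppScalarRight ℤ ℤ F (Equiv.Perm (Fin (n + 1)))) (c • t1)
            = c • (TensorProduct.finsuppScalarRight ℤ ℤ F (Equiv.Perm (Fin (n + 1)))) t1 := h1
        have h2' : (TensorProduct.finsuppScalarRight ℤ ℤ F (Equiv.Perm (Fin (n + 1)))) (c • t2)
            = c • (TensorProduct.finsuppScalarRight ℤ ℤ F (Equiv.Perm (Fin (n + 1)))) t2 := h2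
        show (TensorProduct.finsuppScalarRight ℤ ℤ F (Equiv.Perm (Fin (n + 1)))) (c • (t1 + t2))
            = c • (TensorProduct.finsuppScalarRight ℤ ℤ F (Equiv.Perm (Fin (n + 1)))) (t1 + t2)
        rw [smul_add, map_add, h1', h2', map_add, smul_add]

/-- The canonical `F`-linear equivalence `F ⊗[ℤ] P_n(ℤ) ≃ P_n(F)`. -/
noncomputable def eFP (F : Type) [Field F] (n : ℕ) : F ⊗[ℤ] PZ n ≃ₗ[F] PF F n :=
  LinearEquiv.ofBijective (eL F n)
    (TensorProduct.finsuppScalarRight ℤ ℤ F (Equiv.Perm (Fin (n + 1)))).bijective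

lemma eFP_tmul (c : F) (f : PZ n) : eFP F n (c ⊗ₜ[ℤ] f) = c • phiZF F n f := by
  show TensorProduct.finsuppScalarRight ℤ ℤ F _ (c ⊗ₜ[ℤ] f) = c • phiZF F n f
  ext σ
  rw [TensorProduct.finsuppScalarRight_apply_tmul_apply, Finsupp.smul_apply, phiZF_apply,
    smul_eq_mul, zsmul_eq_mul, mul_comm]

end aux6

theorem stmt_3 (R F : Type) [NonUnitalRing R] [Field F] [CharP F 0] (n : ℕ) :
    Module.finrank F (PF F n ⧸ IdF F (F ⊗[ℤ] R) n) =
      Module.finrank ℤ (PZ n ⧸ IdZModTor R n) := by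
  haveI : CharZero F := CharP.charP_to_charZero F
  classical
  set N' : Submodule ℤ (PZ n) := AddSubgroup.toIntSubmodule (IdZModTor R n) with hN'
  -- the quotient is a torsion-free, finitely generated, hence free abelian group
  haveI hnz : NoZeroSMulDivisors ℤ (PZ n ⧸ N') := by
    refine ⟨fun {c x} h => ?_⟩
    obtain ⟨f, rfl⟩ := Submodule.mkQ_surjective N' x
    by_cases hc : c = 0
    · exact Or.inl hc
    · refine Or.inr ?_
      rw [← map_smul] at h
      have hmem : c • f ∈ IdZModTor R n := (Submodule.Quotient.mk_eq_zero N').mp h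
      have hfm : ∀ v : Fin (n + 1) → R, evalZ R v f ∈ Submodule.torsion ℤ R := by
        intro v
        have h2 := hmem v
        rw [map_smul] at h2
        obtain ⟨a, ha⟩ := h2
        refine ⟨⟨(a : ℤ) * c, mul_mem a.2 (mem_nonZeroDivisors_of_ne_zero hc)⟩, ?_⟩
        show ((a : ℤ) * c) • evalZ R v f = 0
        rw [mul_smul]
        exact ha
      show N'.mkQ f = 0
      rw [Submodule.mkQ_apply, Submodule.Quotient.mk_eq_zero]
      exact hfm
  haveI : Module.Finite ℤ (PZ n ⧸ N') := inferInstance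
  haveI hfree : Module.Free ℤ (PZ n ⧸ N') := Module.free_of_finite_type_torsion_free'
  -- the equivalence transports the identities to the base-changed submodule
  have hmap : Submodule.map (eFP F n : F ⊗[ℤ] PZ n →ₗ[F] PF F n) (LinearMap.range (LinearMap.baseChange F N'.subtype)) =
      IdF F (F ⊗[ℤ] R) n := by
    rw [IdF_eq_span (R := R)]
    apply le_antisymm
    · rintro _ ⟨x, ⟨y, rfl⟩, rfl⟩
      induction y using TensorProduct.induction_on with
      | zero =>
          rw [map_zero, LinearEquiv.coe_coe, (eFP F n).map_zero]
          exact Submodule.zero_mem _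
      | tmul c fz =>
          rw [LinearMap.baseChange_tmul, LinearEquiv.coe_coe, eFP_tmul]
          exact Submodule.smul_mem _ _ (Submodule.subset_span
            ⟨(fz : PZ n), fz.2, rfl⟩)
      | add a b ha hb =>
          rw [map_add, map_add]
          exact add_mem ha hb
    · rw [Submodule.span_le]
      rintro _ ⟨fz, hfz, rfl⟩
      refine Submodule.mem_map.mpr
        ⟨LinearMap.baseChange F N'.subtype ((1 : F) ⊗ₜ[ℤ] (⟨fz, hfz⟩ : N')),
          LinearMap.mem_range_self _ _, ?_⟩
      rw [LinearMap.baseChange_tmul, LinearEquiv.coe_coe, eFP_tmul, one_smul]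
      rfl
  have hexact : LinearMap.ker (LinearMap.baseChange F N'.mkQ) =
      LinearMap.range (LinearMap.baseChange F N'.subtype) := by
    have hker := lTensor_mkQ (R := ℤ) F N'
    ext x
    rw [LinearMap.mem_ker, LinearMap.mem_range]
    have hx1 : LinearMap.baseChange F N'.mkQ x = LinearMap.lTensor F N'.mkQ x :=
      congrFun (LinearMap.baseChange_eq_ltensor N'.mkQ) x
    constructor
    · intro hx
      have hx' : x ∈ LinearMap.ker (LinearMap.lTensor F N'.mkQ) := by
        rw [LinearMap.mem_ker, ← hx1]; exact hx
      rw [hker] at hx'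
      obtain ⟨y, hy⟩ := hx'
      exact ⟨y, by rw [congrFun (LinearMap.baseChange_eq_ltensor N'.subtype) y]; exact hy⟩
    · rintro ⟨y, rfl⟩
      rw [hx1, congrFun (LinearMap.baseChange_eq_ltensor N'.subtype) y]
      have hmem : LinearMap.lTensor F N'.subtype y ∈
          LinearMap.ker (LinearMap.lTensor F N'.mkQ) := by
        rw [hker]
        exact ⟨y, rfl⟩
      exact LinearMap.mem_ker.mp hmem
  have hsurj : Function.Surjective (LinearMap.baseChange F N'.mkQ) := by
    intro y
    obtain ⟨x, hx⟩ := LinearMap.lTensor_surjective F (Submodule.mkQ_surjective N') y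
    exact ⟨x, by rw [congrFun (LinearMap.baseChange_eq_ltensor N'.mkQ) x]; exact hx⟩
  let E : (PF F n ⧸ IdF F (F ⊗[ℤ] R) n) ≃ₗ[F] F ⊗[ℤ] (PZ n ⧸ N') :=
    ((Submodule.Quotient.equiv _ _ (eFP F n) hmap).symm.trans
      (Submodule.quotEquivOfEq _ _ hexact.symm)).trans
      (LinearMap.quotKerEquivOfSurjective _ hsurj)
  rw [E.finrank_eq]
  have eAdd : (PZ n ⧸ N') ≃+ (PZ n ⧸ IdZModTor R n) := AddEquiv.refl _
  rw [← eAdd.toIntLinearEquiv.finrank_eq]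
  let cb := Module.Free.chooseBasis ℤ (PZ n ⧸ N')
  rw [Module.finrank_eq_card_basis (Algebra.TensorProduct.basis F cb),
    Module.finrank_eq_card_basis cb]
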